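/- Let A be a commutative ring and B a finite free A-algebra. Let π₁₂, π₂₃ : B ⊗[A] B → B ⊗[A] B ⊗[A] B be the A-algebra maps sending b ⊗ b' to b ⊗ b' ⊗ 1 and 1 ⊗ b ⊗ b', respectively. Let I, I', I'' be ideals of A such that for all b, b' ∈ B, if b·b' ∈ I''·B then b ∈ I·B or b' ∈ I'·B. Then for all α, β ∈ B ⊗[A] B, if π₁₂(α)·π₂₃(β) lies in I''·(B ⊗[A] B ⊗[A] B), then α ∈ I·(B ⊗[A] B) or β ∈ I'·(B ⊗[A] B). -/

import Mathlib

open TensorProduct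

section Aux

variable {A : Type*} [CommRing A]

lemma aux_mem_map_iff {C : Type*} [CommRing C] [Algebra A C] (J : Ideal A) (x : C) :
    x ∈ Ideal.map (algebraMap A C) J ↔ x ∈ J • (⊤ : Submodule A C) := by
  rw [Ideal.smul_top_eq_map]; rfl

lemma aux_map_mem {M N : Type*} [AddCommGroup M] [Module A M] [AddCommGroup N] [Module A N]
    (f : M →ₗ[A] N) (J : Ideal A) {x : M} (hx : x ∈ J • (⊤ : Submodule A M)) :
    f x ∈ J • (⊤ : Submodule A N) := by
  have : f x ∈ (J • (⊤ : Submodule A M)).map f := Submodule.mem_map_of_mem hx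
  rw [Submodule.map_smul''] at this
  exact smul_mono_right J (le_top : Submodule.map f ⊤ ≤ ⊤) this

end Aux

/-- Let `A` be a commutative ring and `B` a finite free `A`-algebra.
Let `π₁₂, π₂₃ : B ⊗[A] B → B ⊗[A] B ⊗[A] B` send `b ⊗ b'` to `b ⊗ b' ⊗ 1` and
`1 ⊗ b ⊗ b'` respectively.  If `I, I', I''` are ideals of `A` such that whenever
`b * b' ∈ I''·B` one has `b ∈ I·B` or `b' ∈ I'·B`, then for `α, β ∈ B ⊗[A] B`,
`π₁₂(α) * π₂₃(β) ∈ I''·(B ⊗ B ⊗ B)` implies `α ∈ I·(B ⊗ B)` or `β ∈ I'·(B ⊗ B)`. -/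
theorem stmt0 {A B : Type*} [CommRing A] [CommRing B] [Algebra A B]
    [Module.Finite A B] [Module.Free A B]
    (I I' I'' : Ideal A)
    (h : ∀ b b' : B, b * b' ∈ Ideal.map (algebraMap A B) I'' →
      b ∈ Ideal.map (algebraMap A B) I ∨ b' ∈ Ideal.map (algebraMap A B) I')
    (α β : B ⊗[A] B)
    (hαβ :
      (Algebra.TensorProduct.map (AlgHom.id A B)
          (Algebra.TensorProduct.includeLeft : B →ₐ[A] B ⊗[A] B) α) *
        (Algebra.TensorProduct.includeRight : B ⊗[A] B →ₐ[A] B ⊗[A] (B ⊗[A] B)) β ∈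
        Ideal.map (algebraMap A (B ⊗[A] (B ⊗[A] B))) I'') :
    α ∈ Ideal.map (algebraMap A (B ⊗[A] B)) I ∨
      β ∈ Ideal.map (algebraMap A (B ⊗[A] B)) I' := by
  classical
  set ι := Module.Free.ChooseBasisIndex A B
  set e : Module.Basis ι A B := Module.Free.chooseBasis A B with he
  -- coordinate maps
  let L : ι → (B ⊗[A] B →ₗ[A] B) := fun i =>
    TensorProduct.lift ((LinearMap.lsmul A B).comp (e.coord i))
  let R : ι → (B ⊗[A] B →ₗ[A] B) := fun j =>
    TensorProduct.lift (((LinearMap.lsmul A B).comp (e.coord j)).flip)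
  let M : ι → ι → (B ⊗[A] (B ⊗[A] B) →ₗ[A] B) := fun i j =>
    TensorProduct.lift (((LinearMap.lsmul A B).comp (e.coord i)).compl₂ (R j))
  have hL : ∀ (x y : B) i, L i (x ⊗ₜ y) = e.repr x i • y := fun _ _ _ => rfl
  have hR : ∀ (x y : B) j, R j (x ⊗ₜ y) = e.repr y j • x := fun _ _ _ => rfl
  have hM : ∀ (x : B) (w : B ⊗[A] B) i j, M i j (x ⊗ₜ w) = e.repr x i • R j w :=
    fun _ _ _ _ => rfl
  -- key multiplicative identity
  have key : ∀ (γ δ : B ⊗[A] B) i j,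
      M i j ((Algebra.TensorProduct.map (AlgHom.id A B)
          (Algebra.TensorProduct.includeLeft : B →ₐ[A] B ⊗[A] B) γ) *
        (Algebra.TensorProduct.includeRight : B ⊗[A] B →ₐ[A] B ⊗[A] (B ⊗[A] B)) δ)
        = L i γ * R j δ := by
    intro γ δ i j
    induction γ using TensorProduct.induction_on with
    | zero => simp
    | add a b ha hb => simp only [map_add, add_mul, ha, hb]
    | tmul x y =>
      induction δ using TensorProduct.induction_on with
      | zero => simp
      | add a b ha hb => simp only [map_add, mul_add, ha, hb]
      | tmul u v =>
        simp only [Algebra.TensorProduct.map_tmul, AlgHom.coe_id, id_eq,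
          Algebra.TensorProduct.includeLeft_apply, Algebra.TensorProduct.includeRight_apply,
          Algebra.TensorProduct.tmul_mul_tmul, one_mul, mul_one]
        rw [hM, hL, hR, hR]
        rw [smul_mul_smul_comm, smul_smul]
  -- reconstruction identities
  have recL : ∀ γ : B ⊗[A] B, γ = ∑ i, e i ⊗ₜ[A] L i γ := by
    intro γ
    induction γ using TensorProduct.induction_on with
    | zero => simp
    | add a b ha hb =>
      simp only [map_add, tmul_add, Finset.sum_add_distrib, ← ha, ← hb]
    | tmul x y =>
      have : ∀ i, e i ⊗ₜ[A] (L i (x ⊗ₜ[A] y)) = (e.repr x i • e i) ⊗ₜ[A] y := by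
        intro i; rw [hL, smul_tmul]
      rw [Finset.sum_congr rfl fun i _ => this i, ← sum_tmul, e.sum_repr x]
  have recR : ∀ δ : B ⊗[A] B, δ = ∑ j, (R j δ) ⊗ₜ[A] e j := by
    intro δ
    induction δ using TensorProduct.induction_on with
    | zero => simp
    | add a b ha hb =>
      simp only [map_add, add_tmul, Finset.sum_add_distrib, ← ha, ← hb]
    | tmul u v =>
      have : ∀ j, (R j (u ⊗ₜ[A] v)) ⊗ₜ[A] e j = u ⊗ₜ[A] (e.repr v j • e j) := by
        intro j; rw [hR, ← smul_tmul]
      rw [Finset.sum_congr rfl fun j _ => this j, ← tmul_sum, e.sum_repr v]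
  by_contra hc
  push_neg at hc
  obtain ⟨hα, hβ⟩ := hc
  -- find bad coordinates
  have hi : ∃ i, L i α ∉ Ideal.map (algebraMap A B) I := by
    by_contra hall
    push_neg at hall
    apply hα
    rw [aux_mem_map_iff, recL α]
    refine Submodule.sum_mem _ fun i _ => ?_
    exact aux_map_mem (TensorProduct.mk A B B (e i)) I ((aux_mem_map_iff I _).mp (hall i))
  have hj : ∃ j, R j β ∉ Ideal.map (algebraMap A B) I' := by
    by_contra hall
    push_neg at hall
    apply hβ
    rw [aux_mem_map_iff, recR β]
    refine Submodule.sum_mem _ fun j _ => ?_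
    exact aux_map_mem ((TensorProduct.mk A B B).flip (e j)) I'
      ((aux_mem_map_iff I' _).mp (hall j))
  obtain ⟨i, hi⟩ := hi
  obtain ⟨j, hj⟩ := hj
  have hprod : L i α * R j β ∈ Ideal.map (algebraMap A B) I'' := by
    rw [← key α β i j, aux_mem_map_iff]
    exact aux_map_mem (M i j) I'' ((aux_mem_map_iff I'' _).mp hαβ)
  rcases h _ _ hprod with h1 | h1
  · exact hi h1
  · exact hj h1
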